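/- Let 1 ≤ k ≤ n-1. Define the polynomial D(t) = (1/C(n-1,k-1)) * C(t+n-k, n-k) * (sum over j from 0 to k-1 of C(n-k-1+j, j) * C(t+j, j)), viewed as a polynomial in t with rational coefficients, where C(t+a, a) denotes the polynomial (t+a)(t+a-1)...(t+1)/a!. Then all coefficients of D(t) are positive. -/

import Mathlib

open Polynomial


/-- The polynomial binomial coefficient `C(t+a, a) = (t+1)(t+2)⋯(t+a)/a!`. -/
noncomputable def binomPoly (a : ℕ) : Polynomial ℚ :=
  (a.factorial : ℚ)⁻¹ • ((ascPochhammer ℚ a).comp (Polynomial.X + 1))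

/-- The Ehrhart polynomial of the minimal matroid `T_{k,n}`. -/
noncomputable def minD (n k : ℕ) : Polynomial ℚ :=
  (((n - 1).choose (k - 1) : ℚ))⁻¹ •
    (binomPoly (n - k) *
      ∑ j ∈ Finset.range k, ((n - k - 1 + j).choose j : ℚ) • binomPoly j)

private noncomputable def Q (a : ℕ) : Polynomial ℚ := (ascPochhammer ℚ a).comp (Polynomial.X + 1)

private lemma Q_succ (a : ℕ) : Q (a+1) = Q a * (X + C ((a:ℚ)+1)) := by
  unfold Q
  rw [ascPochhammer_succ_right, mul_comp, add_comp, X_comp, natCast_comp]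
  simp only [map_add, C_1, Polynomial.C_eq_natCast]
  ring

private lemma Q_coeff : ∀ a m, (0 ≤ (Q a).coeff m) ∧ (m ≤ a → 0 < (Q a).coeff m) := by
  intro a
  induction a with
  | zero =>
    intro m
    simp only [Q, ascPochhammer_zero, one_comp, coeff_one]
    constructor
    · positivity
    · intro hm
      interval_cases m
      norm_num
  | succ a ih =>
    intro m
    have h : (Q (a+1)).coeff m = (Q a * X).coeff m + (a+1 : ℚ) * (Q a).coeff m := by
      rw [Q_succ, mul_add, coeff_add, coeff_mul_C, mul_comm]
      ring_nf
    have hx : 0 ≤ (Q a * X).coeff m := by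
      cases m with
      | zero => simp [coeff_mul_X_zero]
      | succ m => rw [coeff_mul_X]; exact (ih m).1
    have hnn : 0 ≤ (a+1 : ℚ) * (Q a).coeff m :=
      mul_nonneg (by positivity) (ih m).1
    refine ⟨by rw [h]; linarith, fun hm => ?_⟩
    cases m with
    | zero =>
      rw [h, coeff_mul_X_zero]
      have := (ih 0).2 (Nat.zero_le a)
      nlinarith
    | succ m =>
      rw [h, coeff_mul_X]
      have := (ih m).2 (Nat.lt_succ_iff.mp hm)
      linarith

lemma binomPoly_coeff_nonneg (a m : ℕ) : 0 ≤ (binomPoly a).coeff m := by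
  rw [binomPoly, coeff_smul, smul_eq_mul]
  exact mul_nonneg (by positivity) (Q_coeff a m).1

lemma binomPoly_coeff_pos (a m : ℕ) (h : m ≤ a) : 0 < (binomPoly a).coeff m := by
  rw [binomPoly, coeff_smul, smul_eq_mul]
  exact mul_pos (by positivity) ((Q_coeff a m).2 h)

/-- All coefficients of the Ehrhart polynomial of the minimal matroid are positive
(the polynomial has degree n-1). -/
theorem minD_coeff_pos (n k : ℕ) (hk : 1 ≤ k) (hkn : k ≤ n - 1) :
    ∀ m ≤ n - 1, 0 < (minD n k).coeff m := by
  intro m hm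
  set S : Polynomial ℚ := ∑ j ∈ Finset.range k, ((n - k - 1 + j).choose j : ℚ) • binomPoly j
    with hS
  have hSnn : ∀ i, 0 ≤ S.coeff i := by
    intro i
    rw [hS, finset_sum_coeff]
    refine Finset.sum_nonneg fun j _ => ?_
    rw [coeff_smul, smul_eq_mul]
    exact mul_nonneg (by positivity) (binomPoly_coeff_nonneg j i)
  have hSpos : ∀ i ≤ k - 1, 0 < S.coeff i := by
    intro i hi
    rw [hS, finset_sum_coeff]
    refine Finset.sum_pos' (fun j _ => ?_) ⟨k - 1, Finset.mem_range.mpr (by omega), ?_⟩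
    · rw [coeff_smul, smul_eq_mul]
      exact mul_nonneg (by positivity) (binomPoly_coeff_nonneg j i)
    · rw [coeff_smul, smul_eq_mul]
      refine mul_pos ?_ (binomPoly_coeff_pos _ _ hi)
      have : 0 < (n - k - 1 + (k-1)).choose (k-1) := Nat.choose_pos (by omega)
      positivity
  have hn : 2 ≤ n := by omega
  have hnk1 : 1 ≤ n - k := by omega
  -- choose split
  set m1 := min m (n - k) with hm1
  set m2 := m - m1 with hm2
  have hsplit : m1 + m2 = m := by omega
  have hm1le : m1 ≤ n - k := by omega
  have hm2le : m2 ≤ k - 1 := by omega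
  rw [minD, coeff_smul, smul_eq_mul]
  refine mul_pos ?_ ?_
  · have : 0 < (n-1).choose (k-1) := Nat.choose_pos (by omega)
    positivity
  · rw [coeff_mul]
    refine Finset.sum_pos' (fun p _ => mul_nonneg (binomPoly_coeff_nonneg _ _) (hSnn _))
      ⟨(m1, m2), ?_, mul_pos (binomPoly_coeff_pos _ _ hm1le) (hSpos _ hm2le)⟩
    simp [Finset.mem_antidiagonal, hsplit]
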